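/- The permutation σ = (1 3 2 4)(5 6)(7 9 10 8) of {1,…,11} is an automorphism of the combinatorics K (i.e. for every S ∈ P, σ(S) ∈ P), and σ has order 4 in the symmetric group on {1,…,11}. -/
import Mathlib


open Finset

/-- The point set `P` of the combinatorics `K` on the line set `{1,…,11}`. -/
def Kpoints : Finset (Finset ℕ) :=
  { {1,2}, {1,3,5,7}, {1,4,6,8}, {1,9}, {1,10,11}, {2,3,6,9}, {2,4,5,10},
    {2,7,11}, {2,8}, {3,4}, {3,8,11}, {3,10}, {4,7}, {4,9,11}, {5,6},
    {5,8,9}, {5,11}, {6,7,10}, {6,11}, {7,8}, {7,9}, {8,10}, {9,10} }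

/-- An automorphism of `K`: a permutation of `{1,…,11}` (viewed as a permutation of `ℕ`
fixing everything outside `{1,…,11}`) sending every member of `P` to a member of `P`. -/
def IsAutoK (φ : Equiv.Perm ℕ) : Prop :=
  (∀ n : ℕ, n ∉ Finset.Icc 1 11 → φ n = n) ∧
  ∀ S ∈ Kpoints, S.image φ ∈ Kpoints

/-- The permutation `σ = (1 3 2 4)(5 6)(7 9 10 8)`. -/
def sigmaK : Equiv.Perm ℕ :=
  ([1,3,2,4] : List ℕ).formPerm * ([5,6] : List ℕ).formPerm *
    ([7,9,10,8] : List ℕ).formPerm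


lemma sig_fix (n : ℕ) (h : n ∉ Finset.Icc 1 11) : sigmaK n = n := by
  simp only [Finset.mem_Icc, not_and, not_le] at h
  have h' : n = 0 ∨ 12 ≤ n := by omega
  show ([1,3,2,4] : List ℕ).formPerm (([5,6] : List ℕ).formPerm
    (([7,9,10,8] : List ℕ).formPerm n)) = n
  have m1 : n ∉ ([1,3,2,4] : List ℕ) := by simp; omega
  have m2 : n ∉ ([5,6] : List ℕ) := by simp; omega
  have m3 : n ∉ ([7,9,10,8] : List ℕ) := by simp; omega
  rw [List.formPerm_apply_of_notMem m3, List.formPerm_apply_of_notMem m2,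
    List.formPerm_apply_of_notMem m1]

lemma sig_mem : ∀ S ∈ Kpoints, S.image sigmaK ∈ Kpoints := by decide

lemma sig_pow4 : sigmaK ^ 4 = 1 := by
  ext n
  simp only [pow_succ, pow_zero, one_mul, Equiv.Perm.mul_apply, Equiv.Perm.one_apply]
  by_cases h : n ∈ Finset.Icc 1 11
  · revert h
    have : ∀ m ∈ Finset.Icc 1 11, sigmaK (sigmaK (sigmaK (sigmaK m))) = m := by
      set_option maxRecDepth 4000 in decide
    exact this n
  · rw [sig_fix n h, sig_fix n h, sig_fix n h, sig_fix n h]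

theorem stmt0 : IsAutoK sigmaK ∧ orderOf sigmaK = 4 := by
  refine ⟨⟨sig_fix, sig_mem⟩, ?_⟩
  have h4 : sigmaK ^ 4 = 1 := sig_pow4
  rw [orderOf_eq_iff (by norm_num)]
  refine ⟨h4, ?_⟩
  intro m hm hm0
  interval_cases m <;> intro hc <;>
    · have h1 := congrArg (fun f => f 1) hc
      simp only [pow_succ, pow_zero, one_mul, Equiv.Perm.mul_apply,
        Equiv.Perm.one_apply] at h1
      revert h1; decide
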